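/- Let m ≥ 1 and let a = (a_1,…,a_m), b = (b_1,…,b_m) be complex vectors with sin(π(a_j − a_k)) ≠ 0 for all j ≠ k and sin(π(b_l − a_k)) ≠ 0 for all k, for some fixed index l ∈ {1,…,m}. Then for each choice of sign ε ∈ {+1, −1}: ∑_{k=1}^{m} [ (∏_{j=1}^{m} sin(π(b_j − a_k))) / (∏_{j≠k} sin(π(a_j − a_k))) ] · e^{ε·iπ(b_l − a_k)} / sin(π(b_l − a_k)) = e^{ε·iπψ}, where ψ = ∑_{j=1}^{m} (b_j − a_j). -/

import Mathlib

open Finset Complex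
open Finset Complex
noncomputable def E (z : ℂ) : ℂ := Complex.exp ((Real.pi : ℂ) * Complex.I * z)

lemma E_ne (z : ℂ) : E z ≠ 0 := Complex.exp_ne_zero _

lemma sin_formula (x y : ℂ) : Complex.sin ((Real.pi:ℂ) * (x - y)) =
    (E x ^ 2 - E y ^ 2) * (2 * Complex.I * E x * E y)⁻¹ := by
  have h1 : (Real.pi:ℂ)*(x-y)*Complex.I = ((Real.pi:ℂ)*Complex.I*x) + -((Real.pi:ℂ)*Complex.I*y) := by ring
  have h2 : -((Real.pi:ℂ)*(x-y))*Complex.I = ((Real.pi:ℂ)*Complex.I*y) + -((Real.pi:ℂ)*Complex.I*x) := by ring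
  rw [Complex.sin, h1, h2, Complex.exp_add, Complex.exp_add, Complex.exp_neg, Complex.exp_neg]
  have hx := E_ne x; have hy := E_ne y
  unfold E at *
  field_simp
  have hI : Complex.I * Complex.I = -1 := Complex.I_mul_I
  linear_combination (Complex.exp ((Real.pi:ℂ)*Complex.I*y) * Complex.exp ((Real.pi:ℂ)*Complex.I*y) -
     Complex.exp ((Real.pi:ℂ)*Complex.I*x) * Complex.exp ((Real.pi:ℂ)*Complex.I*x)) * hI
open Finset Polynomial

lemma lagrange_sum {m : ℕ} (u v : Fin m → ℂ) (l : Fin m)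
    (hu : Function.Injective u) :
    ∑ k : Fin m, (v l * ∏ j ∈ univ.erase l, (v j - u k)) *
      ∏ j ∈ univ.erase k, (u j * (u j - u k)⁻¹) = ∏ j : Fin m, v j := by
  classical
  set P : ℂ[X] := C (v l) * ∏ j ∈ univ.erase l, (C (v j) - X) with hPdef
  have hm : 0 < m := l.pos
  have hdeg : P.degree < ((univ : Finset (Fin m)).card : ℕ) := by
    have h1 : P.natDegree ≤ m - 1 := by
      refine le_trans (natDegree_mul_le) ?_
      simp only [natDegree_C, zero_add]
      refine le_trans (natDegree_prod_le _ _) ?_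
      have : ∀ j ∈ univ.erase l, (C (v j) - X).natDegree ≤ 1 := by
        intro j _
        refine le_trans (natDegree_sub_le _ _) ?_
        simp [natDegree_C, natDegree_X]
      have h2 := Finset.sum_le_card_nsmul _ _ 1 this
      simpa [Finset.card_erase_of_mem] using h2
    refine lt_of_le_of_lt (degree_le_natDegree) ?_
    rw [card_univ, Fintype.card_fin]
    exact_mod_cast lt_of_le_of_lt h1 (Nat.sub_lt hm one_pos)
  have hP := Lagrange.eq_interpolate (s := univ) (v := u) hu.injOn hdeg
  have h0 := congrArg (Polynomial.eval 0) hP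
  have heval : ∀ k : Fin m, P.eval (u k) = v l * ∏ j ∈ univ.erase l, (v j - u k) := by
    intro k
    simp [hPdef, eval_prod]
  have hL : P.eval 0 = v l * ∏ j ∈ univ.erase l, v j := by simp [hPdef, eval_prod]
  rw [hL, Lagrange.interpolate_apply] at h0
  rw [Polynomial.eval_finset_sum] at h0
  have h0' : v l * ∏ j ∈ univ.erase l, v j
      = ∑ k : Fin m, (v l * ∏ j ∈ univ.erase l, (v j - u k)) *
          ∏ j ∈ univ.erase k, (u j * (u j - u k)⁻¹) := by
    rw [h0]
    refine Finset.sum_congr rfl fun k _ => ?_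
    rw [eval_mul, eval_C, heval k]
    congr 1
    unfold Lagrange.basis
    rw [eval_prod]
    refine Finset.prod_congr rfl fun j hj => ?_
    unfold Lagrange.basisDivisor
    simp only [eval_mul, eval_C, eval_sub, eval_X, zero_sub]
    rw [show u k - u j = -(u j - u k) by ring, inv_neg]
    ring
  rw [← h0', Finset.mul_prod_erase _ _ (mem_univ l)]

lemma diff_ne {x y : ℂ} (h : Complex.sin ((Real.pi:ℂ) * (x - y)) ≠ 0) : E x ^ 2 - E y ^ 2 ≠ 0 := by
  intro hc
  apply h
  rw [sin_formula, hc, zero_mul]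

lemma exp_formula (x y : ℂ) :
    Complex.exp (Complex.I * (Real.pi : ℂ) * (x - y)) = E x * (E y)⁻¹ := by
  have h1 : Complex.I * (Real.pi:ℂ) * (x - y)
      = ((Real.pi:ℂ) * Complex.I * x) + -((Real.pi:ℂ) * Complex.I * y) := by ring
  rw [h1, Complex.exp_add, Complex.exp_neg]; rfl

lemma case_one {m : ℕ} (a b : Fin m → ℂ) (l : Fin m)
    (ha : ∀ j k : Fin m, j ≠ k → Complex.sin ((Real.pi : ℂ) * (a j - a k)) ≠ 0)
    (hb : ∀ k : Fin m, Complex.sin ((Real.pi : ℂ) * (b l - a k)) ≠ 0) :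
    ∑ k : Fin m,
      ((∏ j : Fin m, Complex.sin ((Real.pi : ℂ) * (b j - a k))) /
        (∏ j ∈ Finset.univ.erase k, Complex.sin ((Real.pi : ℂ) * (a j - a k)))) *
      (Complex.exp (Complex.I * (Real.pi : ℂ) * (b l - a k)) /
        Complex.sin ((Real.pi : ℂ) * (b l - a k)))
    = Complex.exp (Complex.I * (Real.pi : ℂ) * (∑ j : Fin m, (b j - a j))) := by
  classical
  set u : Fin m → ℂ := fun k => E (a k) ^ 2 with hu_def
  set v : Fin m → ℂ := fun j => E (b j) ^ 2 with hv_def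
  have hu : Function.Injective u := by
    intro j k hjk
    by_contra hne
    exact diff_ne (ha j k hne) (sub_eq_zero.mpr hjk)
  have hvl : ∀ k, v l - u k ≠ 0 := fun k => sub_ne_zero.mpr fun h => diff_ne (hb k) (sub_eq_zero.mpr h)
  have hterm : ∀ k : Fin m,
      ((∏ j : Fin m, Complex.sin ((Real.pi : ℂ) * (b j - a k))) /
        (∏ j ∈ Finset.univ.erase k, Complex.sin ((Real.pi : ℂ) * (a j - a k)))) *
      (Complex.exp (Complex.I * (Real.pi : ℂ) * (b l - a k)) /
        Complex.sin ((Real.pi : ℂ) * (b l - a k)))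
      = ((∏ j, E (a j))⁻¹ * (∏ j, E (b j))⁻¹) *
        ((v l * ∏ j ∈ univ.erase l, (v j - u k)) *
          ∏ j ∈ univ.erase k, (u j * (u j - u k)⁻¹)) := by
    intro k
    have hprodb : (∏ j : Fin m, Complex.sin ((Real.pi : ℂ) * (b j - a k)))
        = (∏ j : Fin m, (v j - u k)) * ((2 * Complex.I) ^ m * (∏ j, E (b j)) * E (a k) ^ m)⁻¹ := by
      simp_rw [sin_formula]
      rw [Finset.prod_mul_distrib, Finset.prod_inv_distrib]
      congr 2
      rw [Finset.prod_mul_distrib, Finset.prod_mul_distrib, Finset.prod_const, Finset.prod_const,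
        card_univ, Fintype.card_fin]
    have hproda : (∏ j ∈ univ.erase k, Complex.sin ((Real.pi : ℂ) * (a j - a k)))
        = (∏ j ∈ univ.erase k, (u j - u k)) *
          ((2 * Complex.I) ^ (m - 1) * (∏ j ∈ univ.erase k, E (a j)) * E (a k) ^ (m - 1))⁻¹ := by
      simp_rw [sin_formula]
      rw [Finset.prod_mul_distrib, Finset.prod_inv_distrib]
      congr 2
      rw [Finset.prod_mul_distrib, Finset.prod_mul_distrib, Finset.prod_const, Finset.prod_const,
        Finset.card_erase_of_mem (mem_univ k), card_univ, Fintype.card_fin]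
    have hsplitb : (∏ j : Fin m, (v j - u k)) = (v l - u k) * ∏ j ∈ univ.erase l, (v j - u k) :=
      (Finset.mul_prod_erase _ _ (mem_univ l)).symm
    have hsplitA : (∏ j : Fin m, E (a j)) = E (a k) * ∏ j ∈ univ.erase k, E (a j) :=
      (Finset.mul_prod_erase _ _ (mem_univ k)).symm
    have hsplitu : (∏ j ∈ univ.erase k, (u j * (u j - u k)⁻¹))
        = (∏ j ∈ univ.erase k, E (a j)) ^ 2 * (∏ j ∈ univ.erase k, (u j - u k))⁻¹ := by
      rw [Finset.prod_mul_distrib, Finset.prod_inv_distrib, Finset.prod_pow]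
    have hm1 : m = (m - 1) + 1 := (Nat.succ_pred_eq_of_pos k.pos).symm
    have hpow1 : (2 * Complex.I) ^ m = (2 * Complex.I) ^ (m - 1) * (2 * Complex.I) := by
      rw [← pow_succ, ← hm1]
    have hpow2 : E (a k) ^ m = E (a k) ^ (m - 1) * E (a k) := by
      rw [← pow_succ, ← hm1]
    rw [hprodb, hproda, exp_formula, sin_formula, hsplitb, hsplitA, hsplitu, hpow1, hpow2]
    have hAk : E (a k) ≠ 0 := E_ne _
    have hBl : E (b l) ≠ 0 := E_ne _
    have hPA : (∏ j ∈ univ.erase k, E (a j)) ≠ 0 := Finset.prod_ne_zero_iff.mpr fun j _ => E_ne _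
    have hPB : (∏ j : Fin m, E (b j)) ≠ 0 := Finset.prod_ne_zero_iff.mpr fun j _ => E_ne _
    have hR : (∏ j ∈ univ.erase k, (u j - u k)) ≠ 0 := Finset.prod_ne_zero_iff.mpr fun j hj =>
      sub_ne_zero.mpr (fun h => (Finset.mem_erase.mp hj).1 (hu h))
    have hvlk : v l - u k ≠ 0 := hvl k
    have hI : Complex.I ≠ 0 := Complex.I_ne_zero
    simp only [hu_def, hv_def] at hvlk hR ⊢
    set PB := ∏ j : Fin m, E (b j) with hPB_def
    set PA := ∏ j ∈ univ.erase k, E (a j) with hPA_def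
    set Q := ∏ j ∈ univ.erase l, (E (b j) ^ 2 - E (a k) ^ 2) with hQ_def
    set R := ∏ j ∈ univ.erase k, (E (a j) ^ 2 - E (a k) ^ 2) with hR_def
    set Ak := E (a k) with hAk_def
    set Bl := E (b l) with hBl_def
    generalize (m - 1 : ℕ) = n
    field_simp
  rw [Finset.sum_congr rfl (fun k _ => hterm k), ← Finset.mul_sum,
    lagrange_sum u v l hu]
  have hsum : Complex.exp (Complex.I * (Real.pi : ℂ) * (∑ j : Fin m, (b j - a j)))
      = ∏ j : Fin m, Complex.exp (Complex.I * (Real.pi : ℂ) * (b j - a j)) := by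
    rw [← Complex.exp_sum, Finset.mul_sum]
  rw [hsum]
  rw [← Finset.prod_inv_distrib, ← Finset.prod_inv_distrib, ← Finset.prod_mul_distrib,
    ← Finset.prod_mul_distrib]
  refine Finset.prod_congr rfl fun j _ => ?_
  rw [exp_formula]
  have hA : E (a j) ≠ 0 := E_ne _
  have hB : E (b j) ≠ 0 := E_ne _
  show (E (a j))⁻¹ * (E (b j))⁻¹ * E (b j) ^ 2 = E (b j) * (E (a j))⁻¹
  field_simp

lemma prod_neg' {ι : Type*} (s : Finset ι) (f : ι → ℂ) :
    ∏ j ∈ s, (-f j) = (-1) ^ s.card * ∏ j ∈ s, f j := by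
  rw [← Finset.prod_const, ← Finset.prod_mul_distrib]
  exact Finset.prod_congr rfl fun j _ => by ring

lemma sin_neg' (x y : ℂ) :
    Complex.sin ((Real.pi : ℂ) * (-x - -y)) = -Complex.sin ((Real.pi : ℂ) * (x - y)) := by
  rw [show (Real.pi : ℂ) * (-x - -y) = -((Real.pi : ℂ) * (x - y)) by ring, Complex.sin_neg]

/-- Identity (2.3) of the paper: the Hermite-type sine identity specialized at `z = b l`. -/
theorem sine_exp_identity_at_b {m : ℕ} (hm : 1 ≤ m) (a b : Fin m → ℂ) (l : Fin m)
    (ha : ∀ j k : Fin m, j ≠ k → Complex.sin ((Real.pi : ℂ) * (a j - a k)) ≠ 0)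
    (hb : ∀ k : Fin m, Complex.sin ((Real.pi : ℂ) * (b l - a k)) ≠ 0)
    (ε : ℂ) (hε : ε = 1 ∨ ε = -1) :
    ∑ k : Fin m,
      ((∏ j : Fin m, Complex.sin ((Real.pi : ℂ) * (b j - a k))) /
        (∏ j ∈ Finset.univ.erase k, Complex.sin ((Real.pi : ℂ) * (a j - a k)))) *
      (Complex.exp (ε * Complex.I * (Real.pi : ℂ) * (b l - a k)) /
        Complex.sin ((Real.pi : ℂ) * (b l - a k)))
    = Complex.exp (ε * Complex.I * (Real.pi : ℂ) * (∑ j : Fin m, (b j - a j))) := by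
  rcases hε with h1 | h1
  · subst h1
    simpa only [one_mul] using case_one a b l ha hb
  · subst h1
    have ha' : ∀ j k : Fin m, j ≠ k →
        Complex.sin ((Real.pi : ℂ) * ((fun i => -a i) j - (fun i => -a i) k)) ≠ 0 := by
      intro j k hjk
      simpa only [sin_neg'] using neg_ne_zero.mpr (ha j k hjk)
    have hb' : ∀ k : Fin m,
        Complex.sin ((Real.pi : ℂ) * ((fun i => -b i) l - (fun i => -a i) k)) ≠ 0 := by
      intro k
      simpa only [sin_neg'] using neg_ne_zero.mpr (hb k)
    have H := case_one (fun i => -a i) (fun i => -b i) l ha' hb'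
    have hRHS : Complex.exp ((-1) * Complex.I * (Real.pi : ℂ) * (∑ j : Fin m, (b j - a j)))
        = Complex.exp (Complex.I * (Real.pi : ℂ) * (∑ j : Fin m, ((fun i => -b i) j - (fun i => -a i) j))) := by
      congr 1
      rw [show ∑ j : Fin m, ((fun i => -b i) j - (fun i => -a i) j)
          = -∑ j : Fin m, (b j - a j) by
        rw [← Finset.sum_neg_distrib]; exact Finset.sum_congr rfl fun j _ => by ring]
      ring
    rw [hRHS, ← H]
    refine Finset.sum_congr rfl fun k _ => ?_
    simp only [sin_neg']
    rw [prod_neg', prod_neg',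
      show Complex.I * (Real.pi : ℂ) * (-b l - -a k) = -1 * Complex.I * (Real.pi : ℂ) * (b l - a k) by ring]
    have hD : (∏ j ∈ Finset.univ.erase k, Complex.sin ((Real.pi : ℂ) * (a j - a k))) ≠ 0 :=
      Finset.prod_ne_zero_iff.mpr fun j hj => ha j k (Finset.mem_erase.mp hj).1
    have hS := hb k
    have hmm : (Finset.univ : Finset (Fin m)).card = (Finset.univ.erase k).card + 1 := by
      rw [Finset.card_erase_of_mem (mem_univ k), card_univ, Fintype.card_fin]
      exact (Nat.succ_pred_eq_of_pos k.pos).symm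
    rw [hmm, pow_succ]
    have hc : ((-1 : ℂ)) ^ (Finset.univ.erase k).card ≠ 0 := pow_ne_zero _ (by norm_num)
    generalize (∏ j : Fin m, Complex.sin ((Real.pi : ℂ) * (b j - a k))) = PBs
    generalize hDg : (∏ j ∈ Finset.univ.erase k, Complex.sin ((Real.pi : ℂ) * (a j - a k))) = Dg at hD ⊢
    generalize hSg : Complex.sin ((Real.pi : ℂ) * (b l - a k)) = Sg at hS ⊢
    generalize ((-1 : ℂ)) ^ (Finset.univ.erase k).card = c at hc
    generalize Complex.exp (-1 * Complex.I * (Real.pi : ℂ) * (b l - a k)) = X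
    field_simp
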